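/- Let U be an ℓ×ℓ complex unitary matrix with ℓ distinct eigenvalues λ_1, …, λ_ℓ and a corresponding orthonormal basis of eigenvectors z_1, …, z_ℓ (so U z_r = λ_r z_r), and suppose each eigenvector z_r is flat, i.e., all entries of z_r have the same absolute value 1/√ℓ. Then for every unit vector x ∈ ℂ^ℓ and every subset S of coordinates with characteristic matrix D_S, the time averages (1/K) Σ_{k=0}^{K-1} x* (U^k)* D_S U^k x converge, as K → ∞, to |S|/ℓ, independently of the initial state x. -/

import Mathlib

open Matrix Filter Finset

/-- The diagonal 0–1 characteristic matrix of a subset `S` of coordinates. -/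
noncomputable def charMatrix {ℓ : ℕ} (S : Finset (Fin ℓ)) : Matrix (Fin ℓ) (Fin ℓ) ℂ :=
  Matrix.diagonal fun i => if i ∈ S then 1 else 0

/-- If `U` is unitary with ℓ distinct eigenvalues and an orthonormal
eigenbasis of flat eigenvectors (all entries of each `z_r` have absolute value
`1/√ℓ`), then for every unit vector `x` and every subset `S` of coordinates, the
time averages `(1/K) ∑_{k<K} x* (U^k)* D_S U^k x` converge to `|S|/ℓ`,
independently of the initial state `x`. -/
lemma cesaro_pow_zero (μ : ℂ) (hμ : ‖μ‖ = 1) (hμ1 : μ ≠ 1) :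
    Tendsto (fun K : ℕ => (K:ℂ)⁻¹ * ∑ k ∈ range K, μ ^ k) atTop (nhds 0) := by
  rw [tendsto_zero_iff_norm_tendsto_zero]
  apply squeeze_zero (fun K => norm_nonneg _) (g := fun K : ℕ => (K:ℝ)⁻¹ * (2 / ‖μ - 1‖))
  · intro K
    rw [geom_sum_eq hμ1, norm_mul, norm_inv, Complex.norm_natCast, norm_div]
    gcongr
    calc ‖μ ^ K - 1‖ ≤ ‖μ ^ K‖ + ‖(1:ℂ)‖ := norm_sub_le _ _
      _ ≤ 2 := by rw [norm_pow, hμ, one_pow, norm_one]; norm_num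
  · simpa using (tendsto_inv_atTop_nhds_zero_nat).mul_const (2 / ‖μ - 1‖)

lemma cesaro_one : Tendsto (fun K : ℕ => (K:ℂ)⁻¹ * ∑ k ∈ range K, (1:ℂ) ^ k) atTop (nhds 1) := by
  have h : ∀ᶠ K : ℕ in atTop, (K:ℂ)⁻¹ * ∑ k ∈ range K, (1:ℂ) ^ k = 1 := by
    filter_upwards [eventually_ge_atTop 1] with K hK
    have h0 : (K:ℂ) ≠ 0 := by exact_mod_cast Nat.one_le_iff_ne_zero.mp hK
    simp [h0]
  exact tendsto_const_nhds.congr' (h.mono fun _ e => e.symm)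

theorem avg_prob_walk_regular_uniform (ℓ : ℕ) (hℓ : 0 < ℓ)
    (U : Matrix (Fin ℓ) (Fin ℓ) ℂ)
    (hU : U ∈ Matrix.unitaryGroup (Fin ℓ) ℂ)
    (lam : Fin ℓ → ℂ) (hdist : Function.Injective lam)
    (z : Fin ℓ → Fin ℓ → ℂ)
    (hortho : ∀ r s, star (z r) ⬝ᵥ z s = if r = s then 1 else 0)
    (heig : ∀ r, U *ᵥ z r = lam r • z r)
    (hflat : ∀ r i, ‖z r i‖ = 1 / Real.sqrt ℓ)
    (x : Fin ℓ → ℂ) (hx : star x ⬝ᵥ x = 1)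
    (S : Finset (Fin ℓ)) :
    Filter.Tendsto
      (fun K : ℕ => (K : ℂ)⁻¹ *
        ∑ k ∈ Finset.range K,
          star x ⬝ᵥ (((U ^ k)ᴴ * charMatrix S * U ^ k) *ᵥ x))
      Filter.atTop
      (nhds ((S.card : ℂ) / (ℓ : ℂ))) := by
  have hUU : Uᴴ * U = 1 := by
    have := hU.1
    simpa [Matrix.star_eq_conjTranspose] using this
  have hunit : ∀ r, (starRingEnd ℂ) (lam r) * lam r = 1 := by
    intro r
    have h1 : star (U *ᵥ z r) ⬝ᵥ (U *ᵥ z r) = star (z r) ⬝ᵥ z r := by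
      rw [Matrix.star_mulVec, Matrix.dotProduct_mulVec, Matrix.vecMul_vecMul, hUU,
        Matrix.vecMul_one]
    have h2 : star (U *ᵥ z r) ⬝ᵥ (U *ᵥ z r)
        = (starRingEnd ℂ) (lam r) * lam r * (star (z r) ⬝ᵥ z r) := by
      rw [heig r, star_smul, smul_dotProduct, dotProduct_smul, smul_eq_mul,
        smul_eq_mul, starRingEnd_apply]
      ring
    rw [h1, hortho r r, if_pos rfl] at h2
    simpa using h2.symm
  have habs : ∀ r, ‖lam r‖ = 1 := by
    intro r
    have h := hunit r
    have : (Complex.normSq (lam r) : ℂ) = 1 := by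
      rw [Complex.normSq_eq_conj_mul_self]; exact h
    have hn : Complex.normSq (lam r) = 1 := by exact_mod_cast this
    rw [Complex.norm_def, hn, Real.sqrt_one]
  -- the matrix of eigenvectors
  let Z : Matrix (Fin ℓ) (Fin ℓ) ℂ := Matrix.of fun i r => z r i
  have hZ : Zᴴ * Z = 1 := by
    ext r s
    have := hortho r s
    simp only [dotProduct, Pi.star_apply] at this
    simp only [Matrix.mul_apply, Matrix.conjTranspose_apply, Matrix.one_apply, Z,
      Matrix.of_apply, starRingEnd_apply]
    exact this
  have hZZ : Z * Zᴴ = 1 := mul_eq_one_comm.mp hZ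
  let c : Fin ℓ → ℂ := fun r => ∑ i, (starRingEnd ℂ) (z r i) * x i
  have hc : Zᴴ *ᵥ x = c := by
    ext r
    simp only [Matrix.mulVec, dotProduct, Matrix.conjTranspose_apply, Z, c,
      Matrix.of_apply, starRingEnd_apply]
  have hexp : ∀ i, x i = ∑ r, c r * z r i := by
    intro i
    have h1 : (Z *ᵥ (Zᴴ *ᵥ x)) i = x i := by
      rw [Matrix.mulVec_mulVec, hZZ, Matrix.one_mulVec]
    rw [hc] at h1
    rw [← h1]
    simp only [Matrix.mulVec, dotProduct, Z, Matrix.of_apply]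
    exact Finset.sum_congr rfl fun r _ => mul_comm _ _
  have hcsum : ∑ r, (starRingEnd ℂ) (c r) * c r = 1 := by
    have h1 : star (Zᴴ *ᵥ x) ⬝ᵥ (Zᴴ *ᵥ x) = star x ⬝ᵥ x := by
      rw [Matrix.star_mulVec, Matrix.dotProduct_mulVec, Matrix.vecMul_vecMul,
        Matrix.conjTranspose_conjTranspose, hZZ, Matrix.vecMul_one]
    rw [hc, hx] at h1
    rw [← h1]
    simp only [dotProduct, Pi.star_apply, starRingEnd_apply]
  -- powers of U on eigenvectors
  have hpow : ∀ (k : ℕ) r, (U ^ k) *ᵥ z r = (lam r ^ k) • z r := by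
    intro k r
    induction k with
    | zero => simp
    | succ k ih =>
      rw [pow_succ, ← Matrix.mulVec_mulVec, heig r, Matrix.mulVec_smul, ih, smul_smul,
        pow_succ]
      ring_nf
  -- expansion of U^k x
  have h5 : ∀ (k : ℕ) i, ((U ^ k) *ᵥ x) i = ∑ r, c r * lam r ^ k * z r i := by
    intro k i
    simp only [Matrix.mulVec, dotProduct]
    calc ∑ j, (U ^ k) i j * x j = ∑ j, ∑ r, (U ^ k) i j * (c r * z r j) := by
          refine Finset.sum_congr rfl fun j _ => ?_
          rw [hexp j, Finset.mul_sum]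
      _ = ∑ r, c r * ∑ j, (U ^ k) i j * z r j := by
          rw [Finset.sum_comm]
          refine Finset.sum_congr rfl fun r _ => ?_
          rw [Finset.mul_sum]
          exact Finset.sum_congr rfl fun j _ => by ring
      _ = ∑ r, c r * lam r ^ k * z r i := by
          refine Finset.sum_congr rfl fun r _ => ?_
          have h := congrFun (hpow k r) i
          simp only [Matrix.mulVec, dotProduct, Pi.smul_apply, smul_eq_mul] at h
          rw [h]; ring
  -- key coefficients
  set A : Fin ℓ → Fin ℓ → ℂ :=
    fun r s => (starRingEnd ℂ) (c r) * c s * ∑ i ∈ S, (starRingEnd ℂ) (z r i) * z s i with hAdef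
  set μ : Fin ℓ → Fin ℓ → ℂ := fun r s => (starRingEnd ℂ) (lam r) * lam s with hμdef
  -- key formula
  have h6 : ∀ k : ℕ, star x ⬝ᵥ (((U ^ k)ᴴ * charMatrix S * U ^ k) *ᵥ x)
      = ∑ r, ∑ s, A r s * μ r s ^ k := by
    intro k
    rw [← Matrix.mulVec_mulVec, ← Matrix.mulVec_mulVec, Matrix.dotProduct_mulVec,
      ← Matrix.star_mulVec]
    have hDv : ∀ v : Fin ℓ → ℂ, ∀ i, (charMatrix S *ᵥ v) i
        = (if i ∈ S then 1 else 0) * v i := by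
      intro v i
      simp [charMatrix, Matrix.mulVec_diagonal]
    calc star ((U ^ k) *ᵥ x) ⬝ᵥ (charMatrix S *ᵥ ((U ^ k) *ᵥ x))
        = ∑ i ∈ S, (starRingEnd ℂ) (((U ^ k) *ᵥ x) i) * ((U ^ k) *ᵥ x) i := by
          simp only [dotProduct, Pi.star_apply, hDv, starRingEnd_apply,
            mul_ite, ite_mul, mul_one, mul_zero, zero_mul, one_mul]
          rw [Finset.sum_ite_mem, Finset.univ_inter]
      _ = ∑ i ∈ S, (∑ r, (starRingEnd ℂ) (c r * lam r ^ k * z r i))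
            * (∑ s, c s * lam s ^ k * z s i) := by
          refine Finset.sum_congr rfl fun i _ => ?_
          rw [h5 k i, ← map_sum]
      _ = ∑ i ∈ S, ∑ r, ∑ s, ((starRingEnd ℂ) (c r * lam r ^ k * z r i))
            * (c s * lam s ^ k * z s i) := by
          refine Finset.sum_congr rfl fun i _ => ?_
          rw [Finset.sum_mul_sum]
      _ = ∑ r, ∑ s, ∑ i ∈ S, ((starRingEnd ℂ) (c r * lam r ^ k * z r i))
            * (c s * lam s ^ k * z s i) := by
          rw [Finset.sum_comm]
          exact Finset.sum_congr rfl fun r _ => Finset.sum_comm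
      _ = ∑ r, ∑ s, A r s * μ r s ^ k := by
          refine Finset.sum_congr rfl fun r _ => Finset.sum_congr rfl fun s _ => ?_
          rw [hAdef, hμdef, mul_pow]
          have he : ∀ i : Fin ℓ, (starRingEnd ℂ) (c r * lam r ^ k * z r i)
              * (c s * lam s ^ k * z s i)
              = ((starRingEnd ℂ) (c r) * c s * ((starRingEnd ℂ) (z r i) * z s i))
                * ((starRingEnd ℂ) (lam r) ^ k * lam s ^ k) := by
            intro i; simp only [_root_.map_mul, _root_.map_pow]; ring
          simp only [he]
          rw [← Finset.sum_mul, ← Finset.mul_sum]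
  -- rewrite the averages
  have hAe : ∀ K : ℕ, (K:ℂ)⁻¹ * ∑ k ∈ Finset.range K,
      star x ⬝ᵥ (((U ^ k)ᴴ * charMatrix S * U ^ k) *ᵥ x)
      = ∑ r, ∑ s, A r s * ((K:ℂ)⁻¹ * ∑ k ∈ Finset.range K, μ r s ^ k) := by
    intro K
    simp only [h6]
    have e1 : ∑ k ∈ Finset.range K, ∑ r : Fin ℓ, ∑ s : Fin ℓ, A r s * μ r s ^ k
        = ∑ r : Fin ℓ, ∑ s : Fin ℓ, ∑ k ∈ Finset.range K, A r s * μ r s ^ k := by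
      rw [Finset.sum_comm]
      exact Finset.sum_congr rfl fun r _ => Finset.sum_comm
    rw [e1, Finset.mul_sum]
    refine Finset.sum_congr rfl fun r _ => ?_
    rw [Finset.mul_sum]
    refine Finset.sum_congr rfl fun s _ => ?_
    rw [← Finset.mul_sum]
    ring
  -- eigenvalue ratios
  have hlam_ne : ∀ r, lam r ≠ 0 := by
    intro r h
    have h1 := hunit r
    rw [h, mul_zero] at h1
    exact one_ne_zero h1.symm
  have hmu_abs : ∀ r s, ‖μ r s‖ = 1 := by
    intro r s
    rw [hμdef]
    simp [norm_mul, Complex.norm_conj, habs]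
  have hmu_ne : ∀ r s, r ≠ s → μ r s ≠ 1 := by
    intro r s hrs h
    rw [hμdef] at h
    have h0 : (starRingEnd ℂ) (lam r) ≠ 0 := by
      intro hh
      apply hlam_ne r
      have h2 := congrArg (starRingEnd ℂ) hh
      simpa using h2
    have h1 : (starRingEnd ℂ) (lam r) * lam s = (starRingEnd ℂ) (lam r) * lam r := by
      rw [hunit r]; exact h
    exact hrs (hdist (mul_left_cancel₀ h0 h1)).symm
  -- the limit of each Cesàro average
  have hlim : Tendsto
      (fun K : ℕ => ∑ r, ∑ s, A r s * ((K:ℂ)⁻¹ * ∑ k ∈ Finset.range K, μ r s ^ k))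
      atTop (nhds (∑ r, ∑ s, A r s * (if r = s then 1 else 0))) := by
    refine tendsto_finset_sum _ fun r _ => tendsto_finset_sum _ fun s _ => ?_
    refine Tendsto.const_mul _ ?_
    by_cases h : r = s
    · subst h
      rw [if_pos rfl]
      have h1 : μ r r = 1 := by rw [hμdef]; exact hunit r
      simp only [h1]
      exact cesaro_one
    · rw [if_neg h]
      exact cesaro_pow_zero _ (hmu_abs r s) (hmu_ne r s h)
  -- compute the limit value
  have hval : (∑ r : Fin ℓ, ∑ s : Fin ℓ, A r s * (if r = s then (1:ℂ) else 0))
      = (S.card : ℂ) / (ℓ : ℂ) := by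
    have h1 : ∀ r : Fin ℓ, ∑ s : Fin ℓ, A r s * (if r = s then (1:ℂ) else 0) = A r r := by
      intro r
      rw [Finset.sum_eq_single r]
      · simp
      · intro s _ hs
        rw [if_neg (fun hh => hs hh.symm), mul_zero]
      · intro hr; exact absurd (Finset.mem_univ r) hr
    simp only [h1]
    have h3 : ∀ r i : Fin ℓ, (starRingEnd ℂ) (z r i) * z r i = (ℓ : ℂ)⁻¹ := by
      intro r i
      rw [← Complex.normSq_eq_conj_mul_self]
      have habs2 : Complex.normSq (z r i) = (ℓ:ℝ)⁻¹ := by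
        rw [← Complex.sq_norm, hflat r i, div_pow, one_pow,
          Real.sq_sqrt (Nat.cast_nonneg ℓ), one_div]
      rw [habs2]
      push_cast
      ring
    have h2 : ∀ r : Fin ℓ, A r r = (starRingEnd ℂ) (c r) * c r * ((S.card : ℂ) / ℓ) := by
      intro r
      rw [hAdef]
      simp only [h3]
      rw [Finset.sum_const, nsmul_eq_mul, div_eq_mul_inv]
    simp only [h2]
    rw [← Finset.sum_mul, hcsum, one_mul]
  have hfin := hlim
  rw [hval] at hfin
  exact Tendsto.congr (fun K => (hAe K).symm) hfin
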